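/- Let n ≥ 2 and 1 ≤ q ≤ n − 1 be integers, and let d be an even integer with d ≥ q + 1. Then the number of pairs (a, b), where a : Fin (n−q) → ℕ and b ∈ ℕ satisfy a_0 + ⋯ + a_{n−q−1} + 2b = d, a_0 ≤ d − q − 1, a_j ≤ d − 1 for all 1 ≤ j ≤ n − q − 1, and b ≤ d/2 − 1, equals ∑_{c=0}^{d/2} C(d − 2c + n − q − 1, n − q − 1) − ∑_{c=0}^{⌊q/2⌋} C(n − 2c − 1, n − q − 1) − (n − q). -/

import Mathlib

lemma card_adt (k N : ℕ) :
    (Finset.Nat.antidiagonalTuple k N).card = (k + N - 1).choose N := by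
  classical
  have e0 : {x : Fin k → ℕ // x ∈ Finset.Nat.antidiagonalTuple k N} ≃
      {x : Fin k → ℕ // ∑ i, x i = N} :=
    Equiv.subtypeEquivRight fun x => Finset.Nat.mem_antidiagonalTuple
  have e1 : {x : Fin k → ℕ // ∑ i, x i = N} ≃ Sym (Fin k) N := by
    refine Equiv.subtypeEquiv
      (Finsupp.equivFunOnFinite.symm.trans Multiset.toFinsupp.symm.toEquiv) fun x => ?_
    simp only [Equiv.trans_apply, AddEquiv.toEquiv_eq_coe, EquivLike.coe_coe]
    have : (Multiset.toFinsupp.symm (Finsupp.equivFunOnFinite.symm x) : Multiset (Fin k))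
        = Finsupp.toMultiset (Finsupp.equivFunOnFinite.symm x) := rfl
    rw [this, Finsupp.card_toMultiset, Finsupp.sum_fintype]
    · constructor <;> intro h <;> simpa using h
    · intro; rfl
  have : (Finset.Nat.antidiagonalTuple k N).card = Fintype.card (Sym (Fin k) N) := by
    rw [← Fintype.card_coe]
    exact Fintype.card_congr (e0.trans e1)
  rw [this, Sym.card_sym_eq_choose, Fintype.card_fin]


open Finset

/-- Pairs `(a, b)` with `∑ a + 2b = N`. -/
noncomputable def G (m N : ℕ) : Finset ((Fin m → ℕ) × ℕ) :=
  (Finset.range (N / 2 + 1)).biUnion fun c =>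
    (Finset.Nat.antidiagonalTuple m (N - 2 * c)).image fun a => (a, c)

lemma mem_G {m N : ℕ} {p : (Fin m → ℕ) × ℕ} :
    p ∈ G m N ↔ (∑ j, p.1 j) + 2 * p.2 = N := by
  classical
  simp only [G, mem_biUnion, mem_image, mem_range, Finset.Nat.mem_antidiagonalTuple]
  constructor
  · rintro ⟨c, hc, a, ha, rfl⟩
    simp only at *
    omega
  · intro h
    exact ⟨p.2, by omega, p.1, by omega, rfl⟩

lemma card_G (m N : ℕ) (hm : 1 ≤ m) :
    (G m N).card = ∑ c ∈ Finset.range (N / 2 + 1), (N - 2 * c + m - 1).choose (m - 1) := by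
  classical
  rw [G, card_biUnion]
  · refine Finset.sum_congr rfl fun c _ => ?_
    rw [Finset.card_image_of_injective _ (fun a a' h => (Prod.mk.injEq _ _ _ _ ▸ h).1),
      card_adt]
    have h1 : m + (N - 2 * c) - 1 = N - 2 * c + m - 1 := by omega
    rw [h1, ← Nat.choose_symm (show N - 2 * c ≤ N - 2 * c + m - 1 by omega)]
    congr 1
    omega
  · intro c _ c' _ hcc
    simp only [Finset.disjoint_left, mem_image]
    rintro p ⟨a, _, rfl⟩ ⟨a', _, h⟩
    exact hcc ((Prod.mk.injEq _ _ _ _ ▸ h).2).symm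

lemma key (m q d : ℕ) (hm : 1 ≤ m) (hq1 : 1 ≤ q) (hd : Even d) (hdq : q + 1 ≤ d) :
    haveI : NeZero m := ⟨by omega⟩
    ((G m d).filter (fun p =>
        (∀ j : Fin m, ((j : ℕ) = 0 → p.1 j ≤ d - q - 1) ∧ (1 ≤ (j : ℕ) → p.1 j ≤ d - 1)) ∧
        p.2 ≤ d / 2 - 1)).card + ((G m q).card + m) = (G m d).card := by
  classical
  haveI : NeZero m := ⟨by omega⟩
  obtain ⟨e, he⟩ := hd
  have hde : d = 2 * e := by omega
  have he1 : 1 ≤ e := by omega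
  have hd2 : d / 2 = e := by omega
  set P : (Fin m → ℕ) × ℕ → Prop := fun p =>
    (∀ j : Fin m, ((j : ℕ) = 0 → p.1 j ≤ d - q - 1) ∧ (1 ≤ (j : ℕ) → p.1 j ≤ d - 1)) ∧
    p.2 ≤ d / 2 - 1 with hP
  -- helpers about sums
  have hsum0 : ∀ (f : Fin m → ℕ), ∑ j, f j = f 0 + ∑ j ∈ Finset.univ.erase 0, f j := by
    intro f
    rw [Finset.add_sum_erase _ f (Finset.mem_univ 0)]
  have hle : ∀ (f : Fin m → ℕ) (j : Fin m), f j ≤ ∑ i, f i := fun f j =>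
    Finset.single_le_sum (fun _ _ => Nat.zero_le _) (Finset.mem_univ j)
  have hle2 : ∀ (f : Fin m → ℕ) (j : Fin m), j ≠ 0 → f 0 + f j ≤ ∑ i, f i := by
    intro f j hj
    rw [hsum0 f]
    exact Nat.add_le_add_left
      (Finset.single_le_sum (fun _ _ => Nat.zero_le _)
        (Finset.mem_erase.2 ⟨hj, Finset.mem_univ j⟩)) _
  -- the bad set splits
  have hsplit : (G m d).filter (fun p => ¬ P p) =
      ((G m d).filter (fun p => d - q ≤ p.1 0)) ∪
      (((G m d).filter (fun p => ∃ j : Fin m, 1 ≤ (j : ℕ) ∧ d ≤ p.1 j)) ∪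
       ((G m d).filter (fun p => d / 2 ≤ p.2))) := by
    rw [← Finset.filter_or, ← Finset.filter_or]
    refine Finset.filter_congr fun p hp => ?_
    rw [mem_G] at hp
    simp only [hP, not_and_or, not_forall, not_and_or, _root_.not_imp, not_le]
    constructor
    · rintro (⟨j, hj⟩ | h2)
      · rcases hj with ⟨hj0, hjv⟩ | ⟨hj1, hjv⟩
        · left
          have : j = 0 := by
            ext
            simpa using hj0
          subst this
          omega
        · exact Or.inr (Or.inl ⟨j, hj1, by omega⟩)
      · exact Or.inr (Or.inr (by omega))
    · rintro (h | ⟨j, hj1, hjd⟩ | h)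
      · exact Or.inl ⟨0, Or.inl ⟨by simp, by omega⟩⟩
      · exact Or.inl ⟨j, Or.inr ⟨hj1, by omega⟩⟩
      · exact Or.inr (by omega)
  -- cardinalities of the three pieces
  have hcard2 : ((G m d).filter (fun p => d / 2 ≤ p.2)).card = 1 := by
    have : (G m d).filter (fun p => d / 2 ≤ p.2) = {((fun _ => 0 : Fin m → ℕ), e)} := by
      ext p
      simp only [Finset.mem_filter, Finset.mem_singleton, mem_G]
      constructor
      · rintro ⟨h1, h2⟩
        have hs : ∑ j, p.1 j = 0 ∧ p.2 = e := by
          constructor <;> omega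
        have hz : ∀ j, p.1 j = 0 := by
          intro j
          have := hle p.1 j
          omega
        exact Prod.ext (funext hz) hs.2
      · rintro rfl
        simp only
        rw [Finset.sum_const_zero]
        omega
    rw [this, Finset.card_singleton]
  have hcard1 : ((G m d).filter (fun p => ∃ j : Fin m, 1 ≤ (j : ℕ) ∧ d ≤ p.1 j)).card
      = m - 1 := by
    have hcf : (Finset.univ.filter (fun j : Fin m => 1 ≤ (j : ℕ))).card = m - 1 := by
      have : Finset.univ.filter (fun j : Fin m => 1 ≤ (j : ℕ)) = Finset.univ.erase 0 := by
        ext j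
        simp only [Finset.mem_filter, Finset.mem_univ, true_and, Finset.mem_erase, ne_eq, and_true]
        constructor
        · rintro h rfl
          simp at h
        · intro h
          exact Nat.one_le_iff_ne_zero.2 (fun h' => h (Fin.ext (by simpa using h')))
      rw [this, Finset.card_erase_of_mem (Finset.mem_univ 0), Finset.card_univ,
        Fintype.card_fin]
    rw [← hcf]
    refine (Finset.card_bij (fun j _ => ((Pi.single j d : Fin m → ℕ), 0)) ?_ ?_ ?_).symm
    · intro j hj
      simp only [Finset.mem_filter, Finset.mem_univ, true_and] at hj ⊢
      refine ⟨mem_G.2 ?_, j, hj, by simp⟩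
      simp [Finset.sum_pi_single']
    · intro j _ j' _ h
      by_contra hne
      have h1 : (Pi.single j d : Fin m → ℕ) j = (Pi.single j' d : Fin m → ℕ) j :=
        congrFun (congrArg Prod.fst h) j
      rw [Pi.single_eq_same, Pi.single_eq_of_ne (fun hh => hne hh) ] at h1
      omega
    · intro p hp
      simp only [Finset.mem_filter, mem_G] at hp
      obtain ⟨hsum, j, hj1, hjd⟩ := hp
      have hj : p.1 j = d := by
        have := hle p.1 j
        omega
      have hb : p.2 = 0 := by
        have := hle p.1 j
        omega
      have hrest : ∀ i, i ≠ j → p.1 i = 0 := by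
        intro i hi
        have h2 : p.1 j + ∑ k ∈ Finset.univ.erase j, p.1 k = ∑ k, p.1 k :=
          Finset.add_sum_erase _ p.1 (Finset.mem_univ j)
        have h3 : ∑ k ∈ Finset.univ.erase j, p.1 k = 0 := by omega
        have := Finset.sum_eq_zero_iff.1 h3 i (Finset.mem_erase.2 ⟨hi, Finset.mem_univ i⟩)
        exact this
      refine ⟨j, Finset.mem_filter.2 ⟨Finset.mem_univ j, hj1⟩, ?_⟩
      refine Prod.ext (funext fun i => ?_) hb.symm
      show (Pi.single j d : Fin m → ℕ) i = p.1 i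
      by_cases hi : i = j
      · subst hi; simp [hj]
      · rw [Pi.single_eq_of_ne hi, hrest i hi]
  have hcard0 : ((G m d).filter (fun p => d - q ≤ p.1 0)).card = (G m q).card := by
    refine (Finset.card_bij
      (fun p _ => ((Function.update p.1 0 (p.1 0 + (d - q)) : Fin m → ℕ), p.2)) ?_ ?_ ?_).symm
    · intro p hp
      rw [mem_G] at hp
      have hupd : ∑ j, Function.update p.1 0 (p.1 0 + (d - q)) j
          = (p.1 0 + (d - q)) + ∑ j ∈ Finset.univ.erase 0, p.1 j := by
        rw [hsum0]
        rw [Function.update_self]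
        congr 1
        exact Finset.sum_congr rfl fun i hi =>
          Function.update_of_ne (Finset.mem_erase.1 hi).1 _ _
      have h0 := hsum0 p.1
      refine Finset.mem_filter.2 ⟨mem_G.2 ?_, ?_⟩
      · simp only [hupd]
        omega
      · simp only [Function.update_self]
        omega
    · intro p _ p' _ h
      rw [Prod.mk.injEq] at h
      obtain ⟨hf, hb⟩ := h
      refine Prod.ext (funext fun i => ?_) hb
      by_cases hi : i = 0
      · subst hi
        have := congrFun hf 0
        simp only [Function.update_self] at this
        omega
      · have := congrFun hf i
        simpa [Function.update_of_ne hi] using this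
    · intro p hp
      simp only [Finset.mem_filter, mem_G] at hp
      obtain ⟨hsum, h0⟩ := hp
      refine ⟨((Function.update p.1 0 (p.1 0 - (d - q)) : Fin m → ℕ), p.2), mem_G.2 ?_, ?_⟩
      · have hupd : ∑ j, Function.update p.1 0 (p.1 0 - (d - q)) j
            = (p.1 0 - (d - q)) + ∑ j ∈ Finset.univ.erase 0, p.1 j := by
          rw [hsum0, Function.update_self]
          congr 1
          exact Finset.sum_congr rfl fun i hi =>
            Function.update_of_ne (Finset.mem_erase.1 hi).1 _ _
        have h1 := hsum0 p.1
        simp only [hupd]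
        omega
      · simp only [Function.update_self, Function.update_idem]
        have : p.1 0 - (d - q) + (d - q) = p.1 0 := by omega
        rw [this, Function.update_eq_self]
  -- disjointness
  have hdisj1 : Disjoint ((G m d).filter (fun p => ∃ j : Fin m, 1 ≤ (j : ℕ) ∧ d ≤ p.1 j))
      ((G m d).filter (fun p => d / 2 ≤ p.2)) := by
    rw [Finset.disjoint_left]
    rintro p hp hp'
    simp only [Finset.mem_filter, mem_G] at hp hp'
    obtain ⟨hsum, j, _, hjd⟩ := hp
    have := hle p.1 j
    omega
  have hdisj0 : Disjoint ((G m d).filter (fun p => d - q ≤ p.1 0))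
      (((G m d).filter (fun p => ∃ j : Fin m, 1 ≤ (j : ℕ) ∧ d ≤ p.1 j)) ∪
       ((G m d).filter (fun p => d / 2 ≤ p.2))) := by
    rw [Finset.disjoint_left]
    rintro p hp hp'
    simp only [Finset.mem_filter, mem_G] at hp
    obtain ⟨hsum, h0⟩ := hp
    rcases Finset.mem_union.1 hp' with h | h
    · simp only [Finset.mem_filter, mem_G] at h
      obtain ⟨_, j, hj1, hjd⟩ := h
      have hj0 : j ≠ 0 := by
        intro hh
        subst hh
        simp at hj1
      have := hle2 p.1 j hj0
      omega
    · simp only [Finset.mem_filter, mem_G] at h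
      have := hle p.1 0
      omega
  -- put it together
  have hbad : ((G m d).filter (fun p => ¬ P p)).card = (G m q).card + m := by
    rw [hsplit, Finset.card_union_of_disjoint hdisj0, Finset.card_union_of_disjoint hdisj1,
      hcard0, hcard1, hcard2]
    omega
  have := Finset.card_filter_add_card_filter_not (s := G m d) (p := P)
  rw [hbad] at this
  simp only [hP] at this
  omega

/-- For `n ≥ 2`, `1 ≤ q ≤ n - 1`, and even `d ≥ q + 1`, the number of pairs
`(a, b)` with `a : Fin (n-q) → ℕ`, `b : ℕ`, `a 0 + ⋯ + a (n-q-1) + 2b = d`, `a 0 ≤ d - q - 1`,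
`a j ≤ d - 1` for `1 ≤ j ≤ n - q - 1`, and `b ≤ d/2 - 1`, equals
`∑_{c=0}^{d/2} C(d - 2c + n - q - 1, n - q - 1) - ∑_{c=0}^{⌊q/2⌋} C(n - 2c - 1, n - q - 1) - (n - q)`. -/

theorem stmt_8 (n q d : ℕ) (hn : 2 ≤ n) (hq1 : 1 ≤ q) (hq2 : q ≤ n - 1)
    (hd : Even d) (hdq : q + 1 ≤ d) :
    (Set.ncard {p : (Fin (n - q) → ℕ) × ℕ |
        (∑ j, p.1 j) + 2 * p.2 = d ∧
        (∀ j : Fin (n - q), ((j : ℕ) = 0 → p.1 j ≤ d - q - 1) ∧ (1 ≤ (j : ℕ) → p.1 j ≤ d - 1)) ∧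
        p.2 ≤ d / 2 - 1} : ℤ) =
      (∑ c ∈ Finset.range (d / 2 + 1), ((d - 2 * c + n - q - 1).choose (n - q - 1) : ℤ))
        - (∑ c ∈ Finset.range (q / 2 + 1), ((n - 2 * c - 1).choose (n - q - 1) : ℤ))
        - ((n : ℤ) - q) := by
  classical
  have hm : 1 ≤ n - q := by omega
  haveI : NeZero (n - q) := ⟨by omega⟩
  have hset : {p : (Fin (n - q) → ℕ) × ℕ |
        (∑ j, p.1 j) + 2 * p.2 = d ∧
        (∀ j : Fin (n - q), ((j : ℕ) = 0 → p.1 j ≤ d - q - 1) ∧ (1 ≤ (j : ℕ) → p.1 j ≤ d - 1)) ∧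
        p.2 ≤ d / 2 - 1} =
      ↑((G (n - q) d).filter (fun p =>
        (∀ j : Fin (n - q), ((j : ℕ) = 0 → p.1 j ≤ d - q - 1) ∧ (1 ≤ (j : ℕ) → p.1 j ≤ d - 1)) ∧
        p.2 ≤ d / 2 - 1)) := by
    ext p
    simp only [Set.mem_setOf_eq, Finset.coe_filter, Set.mem_setOf_eq, mem_G]
  rw [hset, Set.ncard_coe_finset]
  have hkey := key (n - q) q d hm hq1 hd hdq
  rw [card_G _ _ hm, card_G _ _ hm] at hkey
  have h1 : (∑ c ∈ Finset.range (d / 2 + 1), ((d - 2 * c + n - q - 1).choose (n - q - 1) : ℤ))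
      = ((∑ c ∈ Finset.range (d / 2 + 1),
          (d - 2 * c + (n - q) - 1).choose (n - q - 1) : ℕ) : ℤ) := by
    rw [Nat.cast_sum]
    refine Finset.sum_congr rfl fun c _ => ?_
    have h : d - 2 * c + n - q - 1 = d - 2 * c + (n - q) - 1 := by omega
    rw [h]
  have h2 : (∑ c ∈ Finset.range (q / 2 + 1), ((n - 2 * c - 1).choose (n - q - 1) : ℤ))
      = ((∑ c ∈ Finset.range (q / 2 + 1),
          (q - 2 * c + (n - q) - 1).choose (n - q - 1) : ℕ) : ℤ) := by
    rw [Nat.cast_sum]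
    refine Finset.sum_congr rfl fun c hc => ?_
    rw [Finset.mem_range] at hc
    have h : n - 2 * c - 1 = q - 2 * c + (n - q) - 1 := by omega
    rw [h]
  rw [h1, h2]
  omega
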